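/- Let φ : ℝⁿ → ℝ be C² with second derivatives bounded by c₂ := ‖φ‖_{C²}, and suppose |∇φ(x₀)| ≥ b₁ > 0 at a point x₀ with φ(x₀) = b. Set r := b₁/c₂ and ν := -∇φ(x₀)/|∇φ(x₀)|. Then the open ball B_r(x₀ + rν) is contained in the sublevel set {x : φ(x) < b}. -/

import Mathlib

open scoped RealInnerProductSpace

/-- Second-order Taylor upper bound for a C² function with bounded second
derivatives. -/
theorem taylor_upper_aux {n : ℕ} (φ : EuclideanSpace ℝ (Fin n) → ℝ)
    (hφ : ContDiff ℝ 2 φ) (c₂ : ℝ)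
    (hbound : ∀ x, ‖iteratedFDeriv ℝ 2 φ x‖ ≤ c₂)
    (x₀ x : EuclideanSpace ℝ (Fin n)) :
    φ x ≤ φ x₀ + fderiv ℝ φ x₀ (x - x₀) + c₂ / 2 * ‖x - x₀‖ ^ 2 := by
  set v := x - x₀ with hv
  have hdiff : Differentiable ℝ φ := hφ.differentiable two_ne_zero
  have hf'cd : ContDiff ℝ 1 (fderiv ℝ φ) := hφ.fderiv_right (le_refl 2)
  -- Lipschitz bound on the derivative
  have lip : ∀ a b : EuclideanSpace ℝ (Fin n),
      ‖fderiv ℝ φ a - fderiv ℝ φ b‖ ≤ c₂ * ‖a - b‖ := by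
    intro a b
    have := convex_univ.norm_image_sub_le_of_norm_fderiv_le
      (f := fderiv ℝ φ) (C := c₂)
      (fun y _ => (hf'cd.differentiable one_ne_zero) y)
      (fun y _ => by
        calc ‖fderiv ℝ (fderiv ℝ φ) y‖
            = ‖iteratedFDeriv ℝ 0 (fderiv ℝ (fderiv ℝ φ)) y‖ := by
              rw [norm_iteratedFDeriv_zero]
          _ = ‖iteratedFDeriv ℝ 1 (fderiv ℝ φ) y‖ := norm_iteratedFDeriv_fderiv
          _ = ‖iteratedFDeriv ℝ 2 φ y‖ := norm_iteratedFDeriv_fderiv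
          _ ≤ c₂ := hbound y)
      (Set.mem_univ b) (Set.mem_univ a)
    simpa using this
  -- 1D restriction
  have hg : ∀ t : ℝ, HasDerivAt (fun s : ℝ => φ (x₀ + s • v))
      (fderiv ℝ φ (x₀ + t • v) v) t := by
    intro t
    have hL : HasDerivAt (fun s : ℝ => x₀ + s • v) v t := by
      simpa using ((hasDerivAt_id t).smul_const v).const_add x₀
    exact (hdiff (x₀ + t • v)).hasFDerivAt.comp_hasDerivAt t hL
  have hcont : Continuous fun t : ℝ => fderiv ℝ φ (x₀ + t • v) v := by
    have : Continuous fun t : ℝ => fderiv ℝ φ (x₀ + t • v) :=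
      hf'cd.continuous.comp (by continuity)
    exact this.clm_apply continuous_const
  have hftc : φ (x₀ + (1 : ℝ) • v) - φ (x₀ + (0 : ℝ) • v)
      = ∫ t in (0 : ℝ)..1, fderiv ℝ φ (x₀ + t • v) v := by
    refine (intervalIntegral.integral_eq_sub_of_hasDerivAt
      (fun t _ => hg t) (hcont.intervalIntegrable 0 1)).symm
  have hx : x₀ + (1 : ℝ) • v = x := by rw [one_smul, hv]; abel
  have h0 : x₀ + (0 : ℝ) • v = x₀ := by simp
  rw [hx, h0] at hftc
  -- pointwise bound on the integrand
  have hpt : ∀ t ∈ Set.Icc (0 : ℝ) 1,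
      fderiv ℝ φ (x₀ + t • v) v ≤ fderiv ℝ φ x₀ v + c₂ * ‖v‖ ^ 2 * t := by
    intro t ht
    have h1 : fderiv ℝ φ (x₀ + t • v) v - fderiv ℝ φ x₀ v
        = (fderiv ℝ φ (x₀ + t • v) - fderiv ℝ φ x₀) v := by simp
    have h2 : (fderiv ℝ φ (x₀ + t • v) - fderiv ℝ φ x₀) v
        ≤ ‖fderiv ℝ φ (x₀ + t • v) - fderiv ℝ φ x₀‖ * ‖v‖ :=
      le_trans (le_abs_self _)
        ((fderiv ℝ φ (x₀ + t • v) - fderiv ℝ φ x₀).le_opNorm v)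
    have h3 : ‖fderiv ℝ φ (x₀ + t • v) - fderiv ℝ φ x₀‖ ≤ c₂ * (t * ‖v‖) := by
      have := lip (x₀ + t • v) x₀
      simpa [norm_smul, abs_of_nonneg ht.1] using this
    have hvnn : (0 : ℝ) ≤ ‖v‖ := norm_nonneg v
    nlinarith [h2, h3, mul_le_mul_of_nonneg_right h3 hvnn]
  -- integrate the bound
  have hint : (∫ t in (0 : ℝ)..1, fderiv ℝ φ (x₀ + t • v) v)
      ≤ ∫ t in (0 : ℝ)..1, (fderiv ℝ φ x₀ v + c₂ * ‖v‖ ^ 2 * t) := by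
    refine intervalIntegral.integral_mono_on (by norm_num)
      (hcont.intervalIntegrable 0 1)
      ((Continuous.add continuous_const ((continuous_const.mul continuous_id))).intervalIntegrable 0 1) hpt
  have hval : (∫ t in (0 : ℝ)..1, (fderiv ℝ φ x₀ v + c₂ * ‖v‖ ^ 2 * t))
      = fderiv ℝ φ x₀ v + c₂ / 2 * ‖v‖ ^ 2 := by
    have hF : ∀ t : ℝ, HasDerivAt
        (fun s : ℝ => fderiv ℝ φ x₀ v * s + c₂ * ‖v‖ ^ 2 * (s ^ 2 / 2))
        (fderiv ℝ φ x₀ v + c₂ * ‖v‖ ^ 2 * t) t := by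
      intro t
      have h1 : HasDerivAt (fun s : ℝ => fderiv ℝ φ x₀ v * s)
          (fderiv ℝ φ x₀ v) t := by
        simpa using (hasDerivAt_id t).const_mul (fderiv ℝ φ x₀ v)
      have h2 : HasDerivAt (fun s : ℝ => c₂ * ‖v‖ ^ 2 * (s ^ 2 / 2))
          (c₂ * ‖v‖ ^ 2 * t) t := by
        have : HasDerivAt (fun s : ℝ => s ^ 2 / 2) t t := by
          simpa using ((hasDerivAt_pow 2 t).div_const 2)
        simpa using this.const_mul (c₂ * ‖v‖ ^ 2)
      exact h1.add h2
    have := intervalIntegral.integral_eq_sub_of_hasDerivAt (a := (0:ℝ)) (b := 1)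
      (fun t _ => hF t)
      ((Continuous.add continuous_const
        ((continuous_const.mul continuous_id))).intervalIntegrable 0 1)
    rw [this]
    norm_num
    ring
  rw [hval] at hint
  linarith [hftc ▸ hint]

/-- Lemma 2.9 (computation): uniform interior ball condition for sublevel sets
of a C² function with bounded second derivatives and non-degenerate gradient. -/
theorem stmt_2 {n : ℕ} (φ : EuclideanSpace ℝ (Fin n) → ℝ)
    (hφ : ContDiff ℝ 2 φ) (c₂ b₁ b : ℝ) (hc₂ : 0 < c₂)
    (hbound : ∀ x, ‖iteratedFDeriv ℝ 2 φ x‖ ≤ c₂)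
    (x₀ : EuclideanSpace ℝ (Fin n)) (hb : φ x₀ = b)
    (hb₁ : 0 < b₁) (hgrad : b₁ ≤ ‖gradient φ x₀‖)
    (r : ℝ) (hr : r = b₁ / c₂)
    (ν : EuclideanSpace ℝ (Fin n))
    (hν : ν = -(‖gradient φ x₀‖⁻¹) • gradient φ x₀) :
    Metric.ball (x₀ + r • ν) r ⊆ {x | φ x < b} := by
  intro x hx
  set g := gradient φ x₀ with hg
  have hgn : (0 : ℝ) < ‖g‖ := lt_of_lt_of_le hb₁ hgrad
  have hgne : g ≠ 0 := by
    intro h; rw [h] at hgn; simp at hgn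
  have hr0 : (0 : ℝ) < r := by rw [hr]; positivity
  set v := x - x₀ with hv
  -- Taylor bound
  have htaylor := taylor_upper_aux φ hφ c₂ hbound x₀ x
  -- relate fderiv and gradient
  have hinner : fderiv ℝ φ x₀ v = ⟪g, v⟫ := by
    rw [hg]
    unfold gradient
    rw [InnerProductSpace.toDual_symm_apply]
  -- ball membership in inner product form
  have hball : ‖v - r • ν‖ < r := by
    have : x - (x₀ + r • ν) = v - r • ν := by rw [hv]; abel
    simpa [Metric.mem_ball, dist_eq_norm, this] using hx
  have hνnorm : ‖ν‖ = 1 := by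
    rw [hν]
    rw [norm_smul]
    simp [abs_of_pos (inv_pos.mpr hgn), inv_mul_cancel₀ (ne_of_gt hgn)]
  have hsq : ‖v - r • ν‖ ^ 2 = ‖v‖ ^ 2 - 2 * r * ⟪v, ν⟫ + r ^ 2 := by
    rw [norm_sub_sq_real, real_inner_smul_right, norm_smul, hνnorm]
    rw [Real.norm_eq_abs, abs_of_pos hr0]
    ring
  have hkey : ⟪v, ν⟫ > ‖v‖ ^ 2 / (2 * r) := by
    have h1 : ‖v - r • ν‖ ^ 2 < r ^ 2 := by
      have := hball
      nlinarith [norm_nonneg (v - r • ν)]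
    rw [hsq] at h1
    rw [gt_iff_lt, div_lt_iff₀ (by positivity)]
    nlinarith
  -- express ⟪g, v⟫ in terms of ⟪v, ν⟫
  have hgv : ⟪g, v⟫ = -‖g‖ * ⟪v, ν⟫ := by
    rw [hν, real_inner_smul_right, real_inner_comm]
    field_simp
  -- combine
  have hvpos : 0 < ‖v‖ ^ 2 ∨ ⟪v, ν⟫ > 0 := by
    right
    calc (0 : ℝ) ≤ ‖v‖ ^ 2 / (2 * r) := by positivity
      _ < ⟪v, ν⟫ := hkey
  have hb₁r : b₁ = r * c₂ := by rw [hr]; field_simp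
  have hfinal : ⟪g, v⟫ + c₂ / 2 * ‖v‖ ^ 2 < 0 := by
    rw [hgv]
    have h2 : ‖g‖ * ⟪v, ν⟫ > ‖g‖ * (‖v‖ ^ 2 / (2 * r)) :=
      mul_lt_mul_of_pos_left hkey hgn
    have h3 : ‖g‖ * (‖v‖ ^ 2 / (2 * r)) ≥ b₁ * (‖v‖ ^ 2 / (2 * r)) := by
      apply mul_le_mul_of_nonneg_right hgrad; positivity
    have h4 : b₁ * (‖v‖ ^ 2 / (2 * r)) = c₂ / 2 * ‖v‖ ^ 2 := by
      rw [hb₁r]; field_simp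
    nlinarith
  have : φ x ≤ φ x₀ + ⟪g, v⟫ + c₂ / 2 * ‖v‖ ^ 2 := by
    rw [← hinner]; exact htaylor
  rw [hb] at this
  simp only [Set.mem_setOf_eq]
  linarith
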